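/- Let v : E → {0,1} be a branch status and let π : V → {0,1} satisfy the energization constraints for v, namely: π(r) = 1; |π(o(e)) − π(d(e))| ≤ 1 − v(e) for every branch e; and π(i) ≤ Σ_{e∈κ} v(e) for every bus i and every cutset κ separating i from r. Then for every bus i, π(i) = 1 if and only if i is connected to r via closed branches. -/

import Mathlib

/-- **Theorem 1 of the paper.** If the binary energization variables `π` satisfy the
reference constraint, the closed-branch equality constraints and the cutset constraints
for a binary branch status `v`, then `π i = 1` iff bus `i` is connected to the
reference bus `r` via closed branches. -/
theorem stmt_0 {V E : Type*} [Fintype V] [Fintype E] [DecidableEq V]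
    (o d : E → V) (r : V) (v : E → ℝ) (π : V → ℝ)
    (hv : ∀ e, v e = 0 ∨ v e = 1)
    (hπbin : ∀ i, π i = 0 ∨ π i = 1)
    (href : π r = 1)
    (hedge : ∀ e, |π (o e) - π (d e)| ≤ 1 - v e)
    (hcut : ∀ (i : V) (S : Finset V), i ∈ S → r ∉ S →
      π i ≤ ∑ e ∈ Finset.univ.filter
        (fun e => (o e ∈ S ∧ d e ∉ S) ∨ (d e ∈ S ∧ o e ∉ S)), v e) :
    ∀ i : V, π i = 1 ↔
      Relation.ReflTransGen
        (fun a b => ∃ e, v e = 1 ∧ ((o e = a ∧ d e = b) ∨ (o e = b ∧ d e = a))) r i := by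
  classical
  set rel : V → V → Prop :=
    fun a b => ∃ e, v e = 1 ∧ ((o e = a ∧ d e = b) ∨ (o e = b ∧ d e = a)) with hrel
  have hsym : Symmetric rel := by
    rintro a b ⟨e, he, h⟩
    exact ⟨e, he, by tauto⟩
  -- along a closed edge, π values are equal
  have hstep : ∀ a b, rel a b → π a = π b := by
    rintro a b ⟨e, he, h⟩
    have := hedge e
    rw [he] at this
    have h0 : |π (o e) - π (d e)| ≤ 0 := by linarith
    have : π (o e) = π (d e) := by
      have := abs_nonpos_iff.mp h0
      linarith
    rcases h with ⟨h1, h2⟩ | ⟨h1, h2⟩ <;> subst h1 <;> subst h2 <;> linarith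
  intro i
  constructor
  · intro hπi
    by_contra hconn
    -- S = buses connected to i
    set S : Finset V := Finset.univ.filter (fun j => Relation.ReflTransGen rel i j) with hS
    have hiS : i ∈ S := Finset.mem_filter.mpr ⟨Finset.mem_univ _, Relation.ReflTransGen.refl⟩
    have hrS : r ∉ S := by
      simp only [hS, Finset.mem_filter, Finset.mem_univ, true_and]
      intro h
      exact hconn (by haveI : Std.Symm rel := ⟨fun a b h => hsym h⟩; exact Relation.ReflTransGen.symmetric.symm _ _ h)
    have := hcut i S hiS hrS
    have hzero : ∑ e ∈ Finset.univ.filter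
        (fun e => (o e ∈ S ∧ d e ∉ S) ∨ (d e ∈ S ∧ o e ∉ S)), v e = 0 := by
      apply Finset.sum_eq_zero
      intro e he
      simp only [Finset.mem_filter, Finset.mem_univ, true_and] at he
      rcases hv e with h0 | h1
      · exact h0
      · exfalso
        rcases he with ⟨hin, hout⟩ | ⟨hin, hout⟩
        · simp only [hS, Finset.mem_filter, Finset.mem_univ, true_and] at hin hout
          exact hout (hin.tail ⟨e, h1, Or.inl ⟨rfl, rfl⟩⟩)
        · simp only [hS, Finset.mem_filter, Finset.mem_univ, true_and] at hin hout
          exact hout (hin.tail ⟨e, h1, Or.inr ⟨rfl, rfl⟩⟩)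
    rw [hzero] at this
    linarith
  · intro h
    have : π r = π i := by
      induction h with
      | refl => rfl
      | tail _ hbc ih => exact ih.trans (hstep _ _ hbc)
    linarith
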